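/- Define J* : ℝ³×ℝ³ → ℝ by J*(ω,v) = (1/2)·‖t(exp(X(ω,v)))‖², where t(g) ∈ ℝ³ is the top-right 3×1 block of the 4×4 matrix g. Fix r > 0 and let g(h) = J*((1+h)·e₁, r·e₃) for h in a neighbourhood of 0, with e₁, e₃ the first and third standard basis vectors of ℝ³. Then the second derivative of g at h = 0 equals (r²/2)·(12 − 8·sin 1 − 10·cos 1). -/

import Mathlib

open scoped Matrix
open NormedSpace

/-- ℝ³ with the Euclidean norm. -/
abbrev E3 := EuclideanSpace ℝ (Fin 3)

/-- The hat map: `hat ω` is the skew-symmetric matrix with `hat ω *ᵥ x = ω × x`. -/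
def hat (ω : E3) : Matrix (Fin 3) (Fin 3) ℝ :=
  !![0, -ω 2, ω 1; ω 2, 0, -ω 0; -ω 1, ω 0, 0]

/-- The homogeneous 4×4 representation of the se(3) element `(ω, v)`. -/
def seX (ω v : E3) : Matrix (Fin 4) (Fin 4) ℝ :=
  Matrix.of fun i j =>
    if hi : (i : ℕ) < 3 then
      if hj : (j : ℕ) < 3 then hat ω ⟨i, hi⟩ ⟨j, hj⟩ else v ⟨i, hi⟩
    else 0

/-- First standard basis vector of ℝ³. -/
noncomputable def e₁ : E3 := EuclideanSpace.single 0 1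

/-- Third standard basis vector of ℝ³. -/
noncomputable def e₃ : E3 := EuclideanSpace.single 2 1

/-- The translation part of a 4×4 matrix: its top-right 3×1 block, as a Euclidean vector. -/
noncomputable def tPart (g : Matrix (Fin 4) (Fin 4) ℝ) : E3 :=
  (WithLp.equiv 2 (Fin 3 → ℝ)).symm fun i => g i.castSucc (Fin.last 3)

/-- The translation-distance objective `J*(ω,v) = ½‖t(exp X(ω,v))‖²`. -/
noncomputable def Jstar (ω v : E3) : ℝ := (1 / 2) * ‖tPart (exp (seX ω v))‖ ^ 2

noncomputable section Aux

def Amat (a r : ℝ) : Matrix (Fin 4) (Fin 4) ℝ :=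
  !![0,0,0,0; 0,0,-a,0; 0,a,0,r; 0,0,0,0]

def Cmat (a r t : ℝ) : Matrix (Fin 4) (Fin 4) ℝ :=
  !![1,0,0,0;
     0, Real.cos (t*a), -Real.sin (t*a), -(r*(1-Real.cos (t*a)))/a;
     0, Real.sin (t*a), Real.cos (t*a), r*Real.sin (t*a)/a;
     0,0,0,1]

attribute [local instance] Matrix.linftyOpNormedRing Matrix.linftyOpNormedAlgebra

lemma seX_eq (a r : ℝ) : seX (a • e₁) (r • e₃) = Amat a r := by
  ext i j
  fin_cases i <;> fin_cases j <;>
    simp [seX, hat, e₁, e₃, Amat, EuclideanSpace.single_apply] <;>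
      first | rfl | (intro h; exact absurd h (by decide))

lemma Cmat_decomp (a r : ℝ) (ha : a ≠ 0) (t : ℝ) :
    Cmat a r t =
      !![1,0,0,0; 0,0,0,-(r/a); 0,0,0,0; 0,0,0,1]
      + Real.cos (t*a) • !![0,0,0,0; 0,1,0,r/a; 0,0,1,0; 0,0,0,0]
      + Real.sin (t*a) • !![0,0,0,0; 0,0,-1,0; 0,1,0,r/a; 0,0,0,0] := by
  ext i j
  fin_cases i <;> fin_cases j <;> simp [Cmat, Matrix.vecHead, Matrix.vecTail] <;> (try field_simp) <;> (try ring)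

lemma hasDerivAt_Cmat (a r : ℝ) (ha : a ≠ 0) (t : ℝ) :
    HasDerivAt (Cmat a r) (Amat a r * Cmat a r t) t := by
  have hu : HasDerivAt (fun t : ℝ => t * a) a t := by
    simpa using (hasDerivAt_id t).mul_const a
  have hcos : HasDerivAt (fun t : ℝ => Real.cos (t*a)) (-Real.sin (t*a) * a) t :=
    hu.cos
  have hsin : HasDerivAt (fun t : ℝ => Real.sin (t*a)) (Real.cos (t*a) * a) t :=
    hu.sin
  have hK :
      HasDerivAt (fun t : ℝ =>
        !![1,0,0,0; 0,0,0,-(r/a); 0,0,0,0; 0,0,0,1]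
        + Real.cos (t*a) • !![0,0,0,0; 0,1,0,r/a; 0,0,1,0; 0,0,0,0]
        + Real.sin (t*a) • !![0,0,0,0; 0,0,-1,0; 0,1,0,r/a; 0,0,0,0])
        ((-Real.sin (t*a) * a) • !![0,0,0,0; 0,1,0,r/a; 0,0,1,0; 0,0,0,0]
          + (Real.cos (t*a) * a) • !![0,0,0,0; 0,0,-1,0; 0,1,0,r/a; 0,0,0,0]) t :=
    ((hcos.smul_const _).const_add _).add (hsin.smul_const _)
  have heq : (fun t : ℝ =>
        !![1,0,0,0; 0,0,0,-(r/a); 0,0,0,0; 0,0,0,1]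
        + Real.cos (t*a) • !![0,0,0,0; 0,1,0,r/a; 0,0,1,0; 0,0,0,0]
        + Real.sin (t*a) • !![0,0,0,0; 0,0,-1,0; 0,1,0,r/a; 0,0,0,0]) = Cmat a r := by
    funext t; exact (Cmat_decomp a r ha t).symm
  rw [heq] at hK
  convert hK using 1
  ext i j
  fin_cases i <;> fin_cases j <;>
    simp [Amat, Cmat, Matrix.mul_apply, Fin.sum_univ_four, Matrix.vecHead, Matrix.vecTail] <;> (try field_simp) <;> (try ring)

lemma exp_Amat (a r : ℝ) (ha : a ≠ 0) : exp (Amat a r) = Cmat a r 1 := by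
  set X := Amat a r with hX
  have hH : ∀ t : ℝ, HasDerivAt (fun t => exp (t • (-X)) * Cmat a r t) 0 t := by
    intro t
    have h1 := hasDerivAt_exp_smul_const' (𝕂 := ℝ) (-X) t
    have h2 := h1.mul (hasDerivAt_Cmat a r ha t)
    refine h2.congr_deriv ?_
    have hcomm : Commute (-X) (exp (t • (-X))) :=
      (((Commute.refl (-X)).smul_right t).exp_right)
    change -X * exp (t • -X) * Cmat a r t + exp (t • -X) * (X * Cmat a r t) = 0
    rw [hcomm.eq]
    noncomm_ring
  have hconst := is_const_of_deriv_eq_zero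
    (fun t => (hH t).differentiableAt) (fun t => (hH t).deriv) (1 : ℝ) (0 : ℝ)
  have hC0 : Cmat a r 0 = 1 := by
    ext i j
    fin_cases i <;> fin_cases j <;> simp [Cmat, Matrix.one_apply, Matrix.vecHead, Matrix.vecTail]
  simp only [zero_smul, NormedSpace.exp_zero, one_mul, hC0, mul_one, one_smul] at hconst
  have hXe : exp X * exp (-X) = 1 := by
    refine (NormedSpace.exp_add_of_commute ((Commute.refl X).neg_right)).symm.trans ?_
    simp [NormedSpace.exp_zero]
  calc exp X = exp X * (exp (-X) * Cmat a r 1) := by rw [hconst, mul_one]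
    _ = exp X * exp (-X) * Cmat a r 1 := by rw [mul_assoc]
    _ = Cmat a r 1 := by rw [hXe, one_mul]

lemma Jval (a r : ℝ) (ha : a ≠ 0) :
    Jstar (a • e₁) (r • e₃) = r ^ 2 * ((1 - Real.cos a) / a ^ 2) := by
  rw [Jstar, seX_eq, exp_Amat a r ha]
  have ht : tPart (Cmat a r 1) =
      (WithLp.equiv 2 (Fin 3 → ℝ)).symm ![0, -(r*(1-Real.cos a))/a, r*Real.sin a/a] := by
    unfold tPart
    congr 1
    funext i
    fin_cases i <;> simp [Cmat, Matrix.vecHead, Matrix.vecTail] <;> rfl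
  rw [ht, EuclideanSpace.norm_eq, Real.sq_sqrt (by positivity)]
  simp only [WithLp.equiv_symm_apply, WithLp.ofLp_toLp, Fin.sum_univ_three, Matrix.cons_val_zero,
    Matrix.cons_val_one, Matrix.head_cons, Matrix.cons_val_two, Matrix.tail_cons,
    Real.norm_eq_abs, sq_abs]
  have hs := Real.sin_sq_add_cos_sq a
  field_simp
  linear_combination r ^ 2 * hs

end Aux

theorem stmt18 (r : ℝ) (hr : 0 < r) :
    deriv (deriv fun h : ℝ => Jstar ((1 + h) • e₁) (r • e₃)) 0 =
      r ^ 2 / 2 * (12 - 8 * Real.sin 1 - 10 * Real.cos 1) := by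
  have hmem : {h : ℝ | 1 + h ≠ 0} ∈ nhds (0 : ℝ) := by
    have : IsOpen {h : ℝ | 1 + h ≠ 0} :=
      isOpen_compl_singleton.preimage (continuous_const.add continuous_id)
    exact this.mem_nhds (by norm_num)
  set f : ℝ → ℝ := fun h => r ^ 2 * ((1 - Real.cos (1 + h)) / (1 + h) ^ 2) with hf
  have hgf : (fun h : ℝ => Jstar ((1 + h) • e₁) (r • e₃)) =ᶠ[nhds 0] f :=
    Filter.eventually_of_mem hmem fun h hh => Jval (1 + h) r hh
  rw [(hgf.deriv).deriv_eq]
  set f1 : ℝ → ℝ := fun h =>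
    r ^ 2 * (Real.sin (1 + h) * ((1 + h) ^ 2)⁻¹
      - 2 * (1 - Real.cos (1 + h)) * ((1 + h) ^ 3)⁻¹) with hf1
  have hder : ∀ h : ℝ, 1 + h ≠ 0 → HasDerivAt f (f1 h) h := by
    intro h hh
    have hu : HasDerivAt (fun h : ℝ => 1 + h) 1 h := by
      simpa using (hasDerivAt_id h).const_add (1 : ℝ)
    have hcos : HasDerivAt (fun h : ℝ => Real.cos (1 + h)) (-Real.sin (1 + h)) h := by
      simpa using hu.cos
    have hnum : HasDerivAt (fun h : ℝ => 1 - Real.cos (1 + h)) (Real.sin (1 + h)) h := by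
      simpa using hcos.const_sub 1
    have hpow : HasDerivAt (fun h : ℝ => (1 + h) ^ 2) (2 * (1 + h)) h := by
      have := hu.fun_pow 2
      simpa using this
    have hinv : HasDerivAt (fun h : ℝ => ((1 + h) ^ 2)⁻¹)
        (-(2 * (1 + h)) / ((1 + h) ^ 2) ^ 2) h := hpow.fun_inv (pow_ne_zero 2 hh)
    have hprod := (hnum.fun_mul hinv).const_mul (r ^ 2)
    have hfe : f = fun h : ℝ => r ^ 2 * ((1 - Real.cos (1 + h)) * ((1 + h) ^ 2)⁻¹) := by
      funext x; rw [hf]; ring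
    rw [hfe]
    refine hprod.congr_deriv ?_
    rw [hf1]
    field_simp
    ring
  have hd1 : deriv f =ᶠ[nhds (0 : ℝ)] f1 :=
    Filter.eventually_of_mem hmem fun h hh => (hder h hh).deriv
  rw [hd1.deriv_eq]
  -- derivative of f1 at 0
  have hu : HasDerivAt (fun h : ℝ => 1 + h) 1 0 := by
    simpa using (hasDerivAt_id (0:ℝ)).const_add (1 : ℝ)
  have hsin : HasDerivAt (fun h : ℝ => Real.sin (1 + h)) (Real.cos 1) 0 := by
    simpa using hu.sin
  have hnum : HasDerivAt (fun h : ℝ => 1 - Real.cos (1 + h)) (Real.sin 1) 0 := by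
    have hcos : HasDerivAt (fun h : ℝ => Real.cos (1 + h)) (-Real.sin 1) 0 := by
      simpa using hu.cos
    simpa using hcos.const_sub 1
  have hinv2 : HasDerivAt (fun h : ℝ => ((1 + h) ^ 2)⁻¹) (-2) 0 := by
    have hpow : HasDerivAt (fun h : ℝ => (1 + h) ^ 2) (2 * (1 + 0)) 0 := by
      simpa using hu.fun_pow 2
    have := hpow.fun_inv (by norm_num)
    refine this.congr_deriv ?_
    norm_num
  have hinv3 : HasDerivAt (fun h : ℝ => ((1 + h) ^ 3)⁻¹) (-3) 0 := by
    have hpow : HasDerivAt (fun h : ℝ => (1 + h) ^ 3) (3 * (1 + 0) ^ 2) 0 := by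
      simpa using hu.fun_pow 3
    have := hpow.fun_inv (by norm_num)
    refine this.congr_deriv ?_
    norm_num
  have hD : HasDerivAt f1
      (r ^ 2 * ((Real.cos 1 * ((1 + 0) ^ 2)⁻¹ + Real.sin (1 + 0) * (-2))
        - (2 * Real.sin 1 * ((1 + 0) ^ 3)⁻¹ + 2 * (1 - Real.cos (1 + 0)) * (-3)))) 0 := by
    have h1 := hsin.fun_mul hinv2
    have h2 := ((hnum.const_mul 2).fun_mul hinv3)
    exact (h1.sub h2).const_mul (r ^ 2)
  rw [hD.deriv]
  norm_num
  ring
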